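/- A function u ∈ C_b([0,∞),X) is pseudo S-asymptotically ω-periodic if and only if for each ε > 0 the set C_ε = {t ∈ [0,∞) : ‖u(t+ω)−u(t)‖ ≥ ε} is an ergodic zero set, i.e. lim_{r→∞} mes(Q_r ∩ C_ε)/mes(Q_r) = 0 where Q_r = [−r,r] and mes denotes the Lebesgue measure. -/

import Mathlib

open MeasureTheory Filter Set

/-- `f ∈ PSAP_ω(X)`: pseudo S-asymptotically ω-periodic. -/
def PSAP {X : Type*} [NormedAddCommGroup X] (ω : ℝ) (f : ℝ → X) : Prop :=
  Tendsto (fun t : ℝ => (1 / t) * ∫ s in (0:ℝ)..t, ‖f (s + ω) - f s‖) atTop (nhds 0)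

/-- `Ω` is an ergodic zero set: `mes(Q_R ∩ Ω)/mes(Q_R) → 0` as `R → ∞`, `Q_R = [-R,R]`. -/
def ErgodicZeroSet (Ω : Set ℝ) : Prop :=
  Tendsto (fun R : ℝ =>
      (volume (Set.Icc (-R) R ∩ Ω)).toReal / (volume (Set.Icc (-R) R)).toReal)
    atTop (nhds 0)

/-- Remark 2.2: `u ∈ PSAP_ω(X)` iff for each ε > 0 the set
`C_ε = {t ∈ [0,∞) : ‖u(t+ω)−u(t)‖ ≥ ε}` is an ergodic zero set. -/
theorem psap_iff_ergodicZeroSet {X : Type*} [NormedAddCommGroup X]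
    (ω : ℝ) (hω : 0 < ω) (u : ℝ → X)
    (hcont : ContinuousOn u (Set.Ici 0)) (hbdd : ∃ B, ∀ t ≥ (0:ℝ), ‖u t‖ ≤ B) :
    PSAP ω u ↔
      ∀ ε > 0, ErgodicZeroSet {t : ℝ | 0 ≤ t ∧ ε ≤ ‖u (t + ω) - u t‖} := by
  obtain ⟨B, hB⟩ := hbdd
  set g : ℝ → ℝ := fun s => ‖u (s + ω) - u s‖ with hgdef
  have hg_nonneg : ∀ s, 0 ≤ g s := fun s => norm_nonneg _
  have h1 : ContinuousOn (fun s : ℝ => u (s + ω)) (Ici 0) :=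
    hcont.comp ((continuous_id.add continuous_const).continuousOn)
      (fun x hx => by simpa using add_nonneg hx hω.le)
  have hg_cont : ContinuousOn g (Ici 0) := (h1.sub hcont).norm
  have hg_int : ∀ R : ℝ, IntegrableOn g (Ioc 0 R) := by
    intro R
    exact ((hg_cont.mono (Icc_subset_Ici_self)).integrableOn_Icc).mono_set Ioc_subset_Icc_self
  have hC_closed : ∀ δ : ℝ, IsClosed {t : ℝ | 0 ≤ t ∧ δ ≤ g t} := by
    intro δ
    have : {t : ℝ | 0 ≤ t ∧ δ ≤ g t} = Ici 0 ∩ g ⁻¹' (Ici δ) := by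
      ext t
      simp only [mem_setOf_eq, mem_inter_iff, mem_Ici, mem_preimage]
    rw [this]
    exact hg_cont.preimage_isClosed_of_isClosed isClosed_Ici isClosed_Ici
  have hC_meas : ∀ δ : ℝ, MeasurableSet {t : ℝ | 0 ≤ t ∧ δ ≤ g t} :=
    fun δ => (hC_closed δ).measurableSet
  set B' : ℝ := max B 0 with hB'def
  have hB'0 : 0 ≤ B' := le_max_right _ _
  have hg_bdd : ∀ s : ℝ, 0 ≤ s → g s ≤ 2 * B' := by
    intro s hs
    have h1 : ‖u (s + ω)‖ ≤ B' := le_trans (hB _ (by linarith)) (le_max_left _ _)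
    have h2 : ‖u s‖ ≤ B' := le_trans (hB _ hs) (le_max_left _ _)
    calc g s ≤ ‖u (s + ω)‖ + ‖u s‖ := norm_sub_le _ _
      _ ≤ 2 * B' := by linarith
  have hvolIcc : ∀ t : ℝ, 0 ≤ t → (volume (Icc (-t) t)).toReal = 2 * t := by
    intro t ht
    rw [Real.volume_Icc, ENNReal.toReal_ofReal (by linarith)]
    ring
  constructor
  · -- PSAP → ergodic zero sets
    intro h ε hε
    unfold ErgodicZeroSet
    have hub : Tendsto (fun R : ℝ => 1 / (2 * ε) * (1 / R * ∫ s in (0:ℝ)..R, g s))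
        atTop (nhds 0) := by
      have := h.const_mul (1 / (2 * ε))
      simpa using this
    refine tendsto_of_tendsto_of_tendsto_of_le_of_le' tendsto_const_nhds hub
      (Eventually.of_forall fun R => div_nonneg ENNReal.toReal_nonneg ENNReal.toReal_nonneg) ?_
    filter_upwards [eventually_gt_atTop (0:ℝ)] with R hR
    set C := {t : ℝ | 0 ≤ t ∧ ε ≤ g t}
    set S := {x : ℝ | ε ≤ g x} ∩ Ioc 0 R with hSdef
    have hsub : Icc (-R) R ∩ C ⊆ S ∪ {0} := by
      rintro t ⟨⟨h1, h2⟩, h3, h4⟩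
      rcases eq_or_lt_of_le h3 with h5 | h5
      · exact Or.inr (by simp [← h5])
      · exact Or.inl ⟨h4, h5, h2⟩
    have hSfin : volume S < ⊤ :=
      lt_of_le_of_lt (measure_mono inter_subset_right) measure_Ioc_lt_top
    have hmle : (volume (Icc (-R) R ∩ C)).toReal ≤ (volume S).toReal := by
      refine ENNReal.toReal_mono hSfin.ne ?_
      calc volume (Icc (-R) R ∩ C) ≤ volume (S ∪ {0}) := measure_mono hsub
        _ ≤ volume S + volume ({0} : Set ℝ) := measure_union_le _ _
        _ = volume S := by simp
    -- Chebyshev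
    have hcheb : ε * (volume S).toReal ≤ ∫ s in Ioc 0 R, g s := by
      have := mul_meas_ge_le_integral_of_nonneg (μ := volume.restrict (Ioc 0 R))
        (f := g) (Eventually.of_forall hg_nonneg) (hg_int R) ε
      rwa [measureReal_def, Measure.restrict_apply' measurableSet_Ioc] at this
    have hIeq : (∫ s in (0:ℝ)..R, g s) = ∫ s in Ioc 0 R, g s :=
      intervalIntegral.integral_of_le hR.le
    rw [hvolIcc R hR.le]
    set I := ∫ s in Ioc 0 R, g s with hIdef
    rw [hIeq]
    have hεa : ε * (volume (Icc (-R) R ∩ C)).toReal ≤ I :=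
      le_trans (mul_le_mul_of_nonneg_left hmle hε.le) hcheb
    rw [div_le_iff₀ (by linarith : (0:ℝ) < 2 * R)]
    have : 1 / (2 * ε) * (1 / R * I) * (2 * R) = I / ε := by
      field_simp
    rw [this, le_div_iff₀ hε, mul_comm]
    exact hεa
  · -- ergodic zero sets → PSAP
    intro h
    rw [PSAP, Metric.tendsto_nhds]
    intro ε hε
    set δ : ℝ := ε / 2 with hδdef
    have hδ : 0 < δ := by positivity
    set C := {t : ℝ | 0 ≤ t ∧ δ ≤ g t} with hCdef
    set c : ℝ := δ / (4 * B' + 1) with hcdef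
    have hc : 0 < c := by positivity
    have hcid : c * (4 * B' + 1) = δ := div_mul_cancel₀ δ (by positivity)
    have hev := (h δ hδ).eventually_lt_const hc
    filter_upwards [hev, eventually_gt_atTop (0:ℝ)] with t hrt ht
    have hIeq : (∫ s in (0:ℝ)..t, g s) = ∫ s in Ioc 0 t, g s :=
      intervalIntegral.integral_of_le ht.le
    set I := ∫ s in Ioc 0 t, g s with hIdef
    have hInonneg : 0 ≤ I :=
      setIntegral_nonneg measurableSet_Ioc (fun x _ => hg_nonneg x)
    -- split the integral
    set s₁ := Ioc 0 t ∩ C with hs₁def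
    set s₂ := Ioc 0 t \ C with hs₂def
    have hdisj : Disjoint s₁ s₂ := disjoint_sdiff_self_right.mono_left inter_subset_right
    have hs₂meas : MeasurableSet s₂ := measurableSet_Ioc.diff (hC_meas δ)
    have hint1 : IntegrableOn g s₁ := (hg_int t).mono_set inter_subset_left
    have hint2 : IntegrableOn g s₂ := (hg_int t).mono_set diff_subset
    have hsplit : I = (∫ s in s₁, g s) + ∫ s in s₂, g s := by
      rw [← setIntegral_union hdisj hs₂meas hint1 hint2, inter_union_diff]
    have hs₁fin : volume s₁ < ⊤ :=
      lt_of_le_of_lt (measure_mono inter_subset_left) measure_Ioc_lt_top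
    have hs₂fin : volume s₂ < ⊤ :=
      lt_of_le_of_lt (measure_mono diff_subset) measure_Ioc_lt_top
    have hb1 : (∫ s in s₁, g s) ≤ 2 * B' * (volume s₁).toReal := by
      refine le_trans (le_abs_self _) ?_
      rw [← Real.norm_eq_abs]
      refine norm_setIntegral_le_of_norm_le_const hs₁fin ?_
      intro x hx
      rw [norm_norm]
      exact hg_bdd x hx.1.1.le
    have hb2 : (∫ s in s₂, g s) ≤ δ * (volume s₂).toReal := by
      refine le_trans (le_abs_self _) ?_
      rw [← Real.norm_eq_abs]
      refine norm_setIntegral_le_of_norm_le_const hs₂fin ?_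
      rintro x ⟨hx1, hx2⟩
      rw [norm_norm]
      have : ¬ (0 ≤ x ∧ δ ≤ g x) := hx2
      push_neg at this
      exact (this hx1.1.le).le
    have hs₂t : (volume s₂).toReal ≤ t := by
      have h1 : volume s₂ ≤ ENNReal.ofReal t := by
        calc volume s₂ ≤ volume (Ioc 0 t) := measure_mono diff_subset
          _ = ENNReal.ofReal t := by rw [Real.volume_Ioc, sub_zero]
      calc (volume s₂).toReal ≤ (ENNReal.ofReal t).toReal :=
            ENNReal.toReal_mono ENNReal.ofReal_ne_top h1
        _ = t := ENNReal.toReal_ofReal ht.le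
    set m := (volume s₁).toReal with hmdef
    set a := (volume (Icc (-t) t ∩ C)).toReal with hadef
    have hma : m ≤ a := by
      refine ENNReal.toReal_mono
        (lt_of_le_of_lt (measure_mono inter_subset_left) measure_Icc_lt_top).ne ?_
      refine measure_mono (inter_subset_inter_left _ ?_)
      intro x hx
      exact ⟨by linarith [hx.1.le], hx.2⟩
    have hm0 : 0 ≤ m := ENNReal.toReal_nonneg
    have hrt' : a < c * (2 * t) := by
      rw [hvolIcc t ht.le] at hrt
      exact (div_lt_iff₀ (by linarith)).mp hrt
    have hIbound : I ≤ 2 * B' * m + δ * t := by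
      rw [hsplit]
      have := mul_le_mul_of_nonneg_left hs₂t hδ.le
      linarith
    have hkey : I < 2 * δ * t := by
      nlinarith [mul_le_mul_of_nonneg_left hma (by linarith : (0:ℝ) ≤ 2 * B'),
        mul_le_mul_of_nonneg_left hrt'.le (by linarith : (0:ℝ) ≤ 2 * B'),
        mul_pos hc ht]
    have hft : 1 / t * (∫ s in (0:ℝ)..t, g s) < ε := by
      rw [hIeq, one_div_mul_eq_div, div_lt_iff₀ ht]
      calc I < 2 * δ * t := hkey
        _ = ε * t := by rw [hδdef]; ring
    have hft0 : 0 ≤ 1 / t * (∫ s in (0:ℝ)..t, g s) := by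
      rw [hIeq]
      positivity
    rw [Real.dist_eq, sub_zero, abs_of_nonneg hft0]
    exact hft
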